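/- For all complex numbers x₁, x₂ ∈ ℂ, |Im(conj(x₁)·x₂ − conj(x₂)·x₁)| ≤ 2·min(|x₁|, |x₂|)·|x₁ − x₂|. -/

import Mathlib

lemma stmt_5_aux (a b : ℂ) :
    |(starRingEnd ℂ a * b - starRingEnd ℂ b * a).im| ≤
      2 * ‖a‖ * ‖a - b‖ := by
  have h1 : (starRingEnd ℂ a * b - starRingEnd ℂ b * a).im
      = 2 * (starRingEnd ℂ a * (b - a)).im := by
    simp [Complex.mul_im, Complex.sub_im, Complex.sub_re, Complex.conj_re, Complex.conj_im]
    ring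
  have h2 : |(starRingEnd ℂ a * (b - a)).im| ≤ ‖a‖ * ‖a - b‖ := by
    refine (Complex.abs_im_le_norm _).trans ?_
    rw [norm_mul, Complex.norm_conj, norm_sub_rev b a]
  rw [h1, abs_mul, abs_two]
  linarith

/-- For all `x₁ x₂ ∈ ℂ`, `|Im(conj(x₁)x₂ − conj(x₂)x₁)| ≤ 2 min(|x₁|,|x₂|)|x₁ − x₂|`. -/
theorem stmt_5 (x₁ x₂ : ℂ) :
    |(starRingEnd ℂ x₁ * x₂ - starRingEnd ℂ x₂ * x₁).im| ≤
      2 * min ‖x₁‖ ‖x₂‖ * ‖x₁ - x₂‖ := by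
  have h1 := stmt_5_aux x₁ x₂
  have h2 := stmt_5_aux x₂ x₁
  have hs : (starRingEnd ℂ x₂ * x₁ - starRingEnd ℂ x₁ * x₂) =
      -(starRingEnd ℂ x₁ * x₂ - starRingEnd ℂ x₂ * x₁) := by ring
  rw [hs, Complex.neg_im, abs_neg, norm_sub_rev x₂ x₁] at h2
  rcases le_total ‖x₁‖ ‖x₂‖ with h | h
  · rw [min_eq_left h]; exact h1
  · rw [min_eq_right h]; exact h2
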